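/- For the binary AIFV code with leaf set N0 and master-node set N1 in tree T0, where each master node at depth l contributes weight (3/4)·2^{-l} and each leaf at depth l contributes 2^{-l}, the Kraft-type equality ∑_{x∈N0} 2^{-l(x)} + (3/4)·∑_{x∈N1} 2^{-l(x)} = 1 implies the lower bound L0 = ∑_x P(x)·l(x) ≥ H_2(X) − P(N1)·(2 − log_2 3), where P(N1) = ∑_{x∈N1} P(x). -/
import Mathlib


open Finset in
/-- Kraft-type lower bound for the binary AIFV tree T0 with leaf set N0 and
master-node set N1. -/
theorem stmt_8 {X : Type*} [Fintype X] [DecidableEq X]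
    (N0 N1 : Finset X) (hdisj : Disjoint N0 N1) (hcover : N0 ∪ N1 = Finset.univ)
    (P : X → ℝ) (hP : ∀ x, 0 ≤ P x) (hPsum : ∑ x, P x = 1)
    (l : X → ℕ)
    (hKraft : ∑ x ∈ N0, ((2 : ℝ) ^ (l x))⁻¹
        + (3/4) * ∑ x ∈ N1, ((2 : ℝ) ^ (l x))⁻¹ = 1) :
    ∑ x, P x * (l x : ℝ) ≥
      (-∑ x, P x * Real.logb 2 (P x)) - (∑ x ∈ N1, P x) * (2 - Real.logb 2 3) := by
  classical
  set Q : X → ℝ := fun x => if x ∈ N1 then (3/4) * ((2:ℝ) ^ (l x))⁻¹ else ((2:ℝ) ^ (l x))⁻¹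
    with hQdef
  have hQpos : ∀ x, 0 < Q x := by
    intro x; simp only [hQdef]; split <;> positivity
  have hQsum : ∑ x, Q x = 1 := by
    rw [← hcover, Finset.sum_union hdisj, ← hKraft, Finset.mul_sum]
    congr 1
    · exact Finset.sum_congr rfl fun x hx => by
        simp [hQdef, Finset.disjoint_left.mp hdisj hx]
    · exact Finset.sum_congr rfl fun x hx => by simp [hQdef, hx]
  have gibbs : ∑ x, P x * Real.log (Q x) ≤ ∑ x, P x * Real.log (P x) := by
    have key : ∀ x ∈ Finset.univ,
        P x * Real.log (Q x) - P x * Real.log (P x) ≤ Q x - P x := by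
      intro x _
      rcases eq_or_lt_of_le (hP x) with h | h
      · rw [← h]; simp; linarith [hQpos x]
      · have hlog := Real.log_le_sub_one_of_pos (div_pos (hQpos x) h)
        rw [Real.log_div (hQpos x).ne' h.ne'] at hlog
        have := mul_le_mul_of_nonneg_left hlog h.le
        have hc : P x * (Q x / P x) = Q x := by field_simp
        rw [mul_sub, mul_sub, hc] at this
        linarith
    have hs := Finset.sum_le_sum key
    rw [Finset.sum_sub_distrib, Finset.sum_sub_distrib, hQsum, hPsum] at hs
    linarith
  have hlogQ : ∀ x, Real.log (Q x)
      = (if x ∈ N1 then Real.log (3/4) else 0) - (l x : ℝ) * Real.log 2 := by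
    intro x
    simp only [hQdef]
    split
    · rw [Real.log_mul (by norm_num) (by positivity), Real.log_inv, Real.log_pow]; ring
    · rw [Real.log_inv, Real.log_pow]; ring
  have hsumQ : ∑ x, P x * Real.log (Q x)
      = (∑ x ∈ N1, P x) * Real.log (3/4)
        - (∑ x, P x * (l x : ℝ)) * Real.log 2 := by
    simp only [hlogQ, mul_sub]
    rw [Finset.sum_sub_distrib]
    congr 1
    · simp only [mul_ite, mul_zero]
      rw [Finset.sum_ite_mem, Finset.univ_inter, ← Finset.sum_mul]
    · rw [Finset.sum_mul]
      exact Finset.sum_congr rfl fun x _ => by ring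
  have h2 : (0:ℝ) < Real.log 2 := Real.log_pos (by norm_num)
  have hlog34 : Real.log (3/4) = Real.log 3 - 2 * Real.log 2 := by
    rw [Real.log_div (by norm_num) (by norm_num), show (4:ℝ) = 2^2 by norm_num,
      Real.log_pow]
    push_cast; ring
  set A := ∑ x, P x * (l x : ℝ) with hA
  set B := ∑ x, P x * Real.log (P x) with hB
  set C := ∑ x ∈ N1, P x with hC
  have key : C * (Real.log 3 - 2 * Real.log 2) - A * Real.log 2 ≤ B := by
    rw [← hlog34]; rw [hsumQ] at gibbs; linarith
  have hBsum : ∑ x, P x * Real.logb 2 (P x) = B / Real.log 2 := by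
    rw [hB, Finset.sum_div]
    exact Finset.sum_congr rfl fun x _ => by rw [Real.logb, mul_div_assoc]
  rw [ge_iff_le, hBsum, Real.logb, ← sub_nonneg]
  have hexp : A - (-(B / Real.log 2) - C * (2 - Real.log 3 / Real.log 2))
      = (A * Real.log 2 + B - C * (Real.log 3 - 2 * Real.log 2)) / Real.log 2 := by
    field_simp
    ring
  rw [hexp]
  exact div_nonneg (by linarith) h2.le
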